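/- Let C and S be categories with finite products and J : S → C a bijective-on-objects strict-product-preserving functor, and suppose C has a J-uniform parametrized fixpoint operator. If C is moreover a category with finite biproducts regarded as a Cartesian differential category via D[f] = f ∘ π₂, and all projection maps are strict with respect to fix, then the differential-fixpoint rule holds. -/

import Mathlib

open CategoryTheory CategoryTheory.Limits

universe v u

variable (C : Type u) [Category.{v} C] [HasFiniteProducts C]

/-- Cartesian left additive category: hom-sets are commutative monoids,
precomposition is additive, and the projections are additive maps. -/
class CartesianLeftAdditive [∀ A B : C, AddCommMonoid (A ⟶ B)] : Prop where
  comp_add : ∀ {X A B : C} (x : X ⟶ A) (f g : A ⟶ B), x ≫ (f + g) = x ≫ f + x ≫ g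
  comp_zero : ∀ {X A B : C} (x : X ⟶ A), x ≫ (0 : A ⟶ B) = 0
  add_comp_fst : ∀ {X A B : C} (x y : X ⟶ A ⨯ B),
    (x + y) ≫ (prod.fst : A ⨯ B ⟶ A) = x ≫ prod.fst + y ≫ prod.fst
  add_comp_snd : ∀ {X A B : C} (x y : X ⟶ A ⨯ B),
    (x + y) ≫ (prod.snd : A ⨯ B ⟶ B) = x ≫ prod.snd + y ≫ prod.snd
  zero_comp_fst : ∀ {X A B : C}, (0 : X ⟶ A ⨯ B) ≫ (prod.fst : A ⨯ B ⟶ A) = 0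
  zero_comp_snd : ∀ {X A B : C}, (0 : X ⟶ A ⨯ B) ≫ (prod.snd : A ⨯ B ⟶ B) = 0

/-- A differential combinator satisfying the axioms [CD.1]-[CD.7] of a
Cartesian differential category. -/
structure DiffComb [∀ A B : C, AddCommMonoid (A ⟶ B)] where
  D : ∀ {A B : C}, (A ⟶ B) → (A ⨯ A ⟶ B)
  cd1_zero : ∀ {A B : C}, D (0 : A ⟶ B) = 0
  cd1_add : ∀ {A B : C} (f g : A ⟶ B), D (f + g) = D f + D g
  cd2_zero : ∀ {A B X : C} (f : A ⟶ B) (x : X ⟶ A), prod.lift x 0 ≫ D f = 0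
  cd2_add : ∀ {A B X : C} (f : A ⟶ B) (x y z : X ⟶ A),
    prod.lift x (y + z) ≫ D f = prod.lift x y ≫ D f + prod.lift x z ≫ D f
  cd3_id : ∀ {A : C}, D (𝟙 A) = prod.snd
  cd3_fst : ∀ {A B : C},
    D (prod.fst : A ⨯ B ⟶ A) = (prod.snd : (A ⨯ B) ⨯ (A ⨯ B) ⟶ A ⨯ B) ≫ prod.fst
  cd3_snd : ∀ {A B : C},
    D (prod.snd : A ⨯ B ⟶ B) = (prod.snd : (A ⨯ B) ⨯ (A ⨯ B) ⟶ A ⨯ B) ≫ prod.snd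
  cd4 : ∀ {A B B' : C} (f : A ⟶ B) (g : A ⟶ B'), D (prod.lift f g) = prod.lift (D f) (D g)
  cd5 : ∀ {A B E : C} (f : A ⟶ B) (g : B ⟶ E), D (f ≫ g) = prod.lift (prod.fst ≫ f) (D f) ≫ D g
  cd6 : ∀ {A B X : C} (f : A ⟶ B) (x y z : X ⟶ A),
    prod.lift (prod.lift x y) (prod.lift 0 z) ≫ D (D f) = prod.lift x z ≫ D f
  cd7 : ∀ {A B X : C} (f : A ⟶ B) (x y z : X ⟶ A),
    prod.lift (prod.lift x y) (prod.lift z 0) ≫ D (D f) =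
      prod.lift (prod.lift x z) (prod.lift y 0) ≫ D (D f)

variable {C}

/-- The tangent bundle functor on maps: `T f = ⟨f ∘ π₁, D[f]⟩`. -/
noncomputable def DiffComb.T [∀ A B : C, AddCommMonoid (A ⟶ B)] (Dc : DiffComb C) {A B : C}
    (f : A ⟶ B) : A ⨯ A ⟶ B ⨯ B :=
  prod.lift (prod.fst ≫ f) (Dc.D f)

/-- The canonical middle-swap isomorphism `c = ⟨π₁,π₃,π₂,π₄⟩`. -/
noncomputable def cmap (A B X Y : C) : (A ⨯ B) ⨯ (X ⨯ Y) ⟶ (A ⨯ X) ⨯ (B ⨯ Y) :=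
  prod.lift (prod.map prod.fst prod.fst) (prod.map prod.snd prod.snd)

/-- A parametrized fixpoint operator. -/
structure ParamFix (C : Type u) [Category.{v} C] [HasFiniteProducts C] where
  fix : ∀ {A X : C}, (A ⨯ X ⟶ X) → (A ⟶ X)
  fix_eq : ∀ {A X : C} (f : A ⨯ X ⟶ X), prod.lift (𝟙 A) (fix f) ≫ f = fix f
  natural : ∀ {A B X : C} (g : A ⟶ B) (f : B ⨯ X ⟶ X),
    g ≫ fix f = fix (prod.map g (𝟙 X) ≫ f)

/-- A map `h` is strict with respect to a parametrized fixpoint operator. -/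
def StrictMap (P : ParamFix C) {X Y : C} (h : X ⟶ Y) : Prop :=
  ∀ {A : C} (f : A ⨯ X ⟶ X) (g : A ⨯ Y ⟶ Y),
    f ≫ h = prod.map (𝟙 A) h ≫ g → P.fix f ≫ h = P.fix g

universe v₂ u₂

/-- let `J : S ⥤ C` be a bijective-on-objects finite-product
preserving functor and `fix` a `J`-uniform parametrized fixpoint operator on `C`.
If `C` has finite biproducts, regarded as a Cartesian differential category via
`D[f] = f ∘ π₂`, and all projections are strict, then the differential-fixpoint
rule holds. -/
theorem uniform_biproduct_diff_fix
    {S : Type u₂} [Category.{v₂} S] [HasFiniteProducts S]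
    (J : S ⥤ C) (hJbij : Function.Bijective J.obj)
    [PreservesFiniteProducts J]
    [∀ A B : C, AddCommMonoid (A ⟶ B)] [CartesianLeftAdditive C]
    (hadd : ∀ {X A B : C} (x y : X ⟶ A) (f : A ⟶ B), (x + y) ≫ f = x ≫ f + y ≫ f)
    (hzero : ∀ {X A B : C} (f : A ⟶ B), (0 : X ⟶ A) ≫ f = 0)
    (P : ParamFix C)
    (huniform : ∀ {X Y : S} (h : X ⟶ Y), StrictMap P (J.map h))
    (hfst : ∀ A B : C, StrictMap P (prod.fst : A ⨯ B ⟶ A))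
    (hsnd : ∀ A B : C, StrictMap P (prod.snd : A ⨯ B ⟶ B)) :
    ∀ {A X : C} (f : A ⨯ X ⟶ X),
      prod.snd ≫ P.fix f =
        P.fix (cmap A A X X ≫ prod.lift (prod.fst ≫ f) (prod.snd ≫ f)) ≫
          prod.snd := by
  intro A X f
  rw [P.natural]
  refine (hsnd X X _ (prod.map prod.snd (𝟙 X) ≫ f) ?_).symm
  simp [cmap, prod.map_map]
  exact prod.lift_snd _ _
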